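/- For the Markov chain (ζ_n, θ_n) on [0,2π) × [0,2π) defined by θ_{n+1} := θ_n + ζ_n/2 + (ν_{n+1}+1)α_{n+1} + ζ_{n+1}/2 (mod 2π), with (ξ_n, α_n) as above, Döblin's condition holds: there exists δ > 0 such that for every measurable A ⊂ [0,2π) × [0,2π) and every state (ζ, θ), P((ζ_{n+1}, θ_{n+1}) ∈ A | (ζ_n, θ_n) = (ζ, θ)) ≥ δ · π̂(A), where π̂ is the product of TRUNCEXP(1, 2π) and UNI[0, 2π). -/

import Mathlib

open MeasureTheory ProbabilityTheory Real Set

/-- TRUNCEXP(1, L): density e^{-x}/(1-e^{-L}) on [0,L]. -/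
noncomputable def truncExpMeasure (L : ℝ) : Measure ℝ :=
  volume.withDensity fun x =>
    ENNReal.ofReal (if x ∈ Icc 0 L then Real.exp (-x) / (1 - Real.exp (-L)) else 0)

/-- The uniform distribution on [0, 2π). -/
noncomputable def uniMeasure : Measure ℝ :=
  (ENNReal.ofReal (2 * π))⁻¹ • volume.restrict (Ico 0 (2 * π))

/-- The scattering-angle distribution: density (1/4)·sin(x/2) on [0, 2π]. -/
noncomputable def sinHalfMeasure : Measure ℝ :=
  volume.withDensity fun x =>
    ENNReal.ofReal (if x ∈ Icc 0 (2 * π) then (1 / 4) * Real.sin (x / 2) else 0)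

/-- Reduction modulo 2π to [0, 2π). -/
noncomputable def mod2pi (x : ℝ) : ℝ := x - 2 * π * ⌊x / (2 * π)⌋

lemma mod2pi_eq_fract (x : ℝ) : mod2pi x = 2 * π * Int.fract (x / (2 * π)) := by
  rw [mod2pi, Int.fract, mul_sub, mul_div_cancel₀ _ (ne_of_gt Real.two_pi_pos)]

lemma mod2pi_mem (x : ℝ) : mod2pi x ∈ Ico 0 (2 * π) := by
  rw [mod2pi_eq_fract]
  constructor
  · exact mul_nonneg (le_of_lt Real.two_pi_pos) (Int.fract_nonneg _)
  · nlinarith [Int.fract_lt_one (x / (2*π)), Int.fract_nonneg (x / (2*π)), Real.two_pi_pos]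

lemma mod2pi_eq_self {x : ℝ} (hx : x ∈ Ico 0 (2 * π)) : mod2pi x = x := by
  rw [mod2pi_eq_fract, Int.fract_eq_self.mpr, mul_div_cancel₀ _ (ne_of_gt Real.two_pi_pos)]
  constructor
  · exact div_nonneg hx.1 (le_of_lt Real.two_pi_pos)
  · rw [div_lt_one Real.two_pi_pos]; exact hx.2

lemma mod2pi_add_int (x : ℝ) (k : ℤ) : mod2pi (x + 2 * π * k) = mod2pi x := by
  rw [mod2pi_eq_fract, mod2pi_eq_fract]
  congr 1
  rw [show (x + 2 * π * k) / (2 * π) = x / (2*π) + k by field_simp, Int.fract_add_intCast]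

lemma mod2pi_eq_sub {x : ℝ} (hx : x ∈ Ico (2*π) (4*π)) : mod2pi x = x - 2*π := by
  have h1 : mod2pi x = mod2pi ((x - 2*π) + 2*π*(1:ℤ)) := by norm_num
  rw [h1, mod2pi_add_int, mod2pi_eq_self ⟨by linarith [hx.1], by linarith [hx.2]⟩]

lemma mod2pi_spec (x : ℝ) : mod2pi x = x - 2*π*⌊x/(2*π)⌋ := rfl

lemma measurable_mod2pi : Measurable mod2pi := by
  unfold mod2pi
  exact measurable_id.sub (((measurable_from_top.comp ((measurable_id.div_const _).floor)) : Measurable fun x : ℝ => ((⌊x / (2*π)⌋ : ℤ) : ℝ)).const_mul _)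

lemma vol_translate (c : ℝ) (T : Set ℝ) : volume ((fun u => u + c) ⁻¹' T) = volume T := by
  exact measure_preimage_add_right volume c T

lemma L2' {c₀ : ℝ} (hc : c₀ ∈ Ico 0 (2*π)) {T : Set ℝ} (hTm : MeasurableSet T)
    (hTs : T ⊆ Ico 0 (2*π)) :
    volume {u | u ∈ Ico 0 (2*π) ∧ mod2pi (c₀ + u) ∈ T} = volume T := by
  set w : ℝ := 2*π - c₀ with hw
  have hw0 : 0 ≤ w := by simp [hw]; linarith [hc.2]
  have hw2 : w ≤ 2*π := by simp [hw]; linarith [hc.1]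
  have hA1 : {u | u ∈ Ico 0 w ∧ mod2pi (c₀ + u) ∈ T} = (fun u => u + c₀) ⁻¹' (T ∩ Ico c₀ (2*π)) := by
    ext u
    simp only [mem_setOf_eq, mem_preimage, mem_inter_iff, mem_Ico]
    constructor
    · rintro ⟨⟨h1, h2⟩, h3⟩
      have hm : mod2pi (c₀ + u) = c₀ + u :=
        mod2pi_eq_self ⟨by linarith [hc.1], by simp [hw] at h2; linarith⟩
      rw [hm] at h3
      refine ⟨by rwa [add_comm], ⟨by linarith, by simp [hw] at h2; linarith⟩⟩
    · rintro ⟨h1, h2, h3⟩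
      have hm : mod2pi (c₀ + u) = c₀ + u := mod2pi_eq_self ⟨by linarith [hc.1, h2], by linarith⟩
      exact ⟨⟨by linarith, by simp [hw]; linarith⟩, by rwa [hm, add_comm c₀ u]⟩
  have hA2 : {u | u ∈ Ico w (2*π) ∧ mod2pi (c₀ + u) ∈ T} =
      (fun u => u + (c₀ - 2*π)) ⁻¹' (T ∩ Ico 0 c₀) := by
    ext u
    simp only [mem_setOf_eq, mem_preimage, mem_inter_iff, mem_Ico]
    constructor
    · rintro ⟨⟨h1, h2⟩, h3⟩
      have hm : mod2pi (c₀ + u) = c₀ + u - 2*π :=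
        mod2pi_eq_sub ⟨by simp [hw] at h1; linarith, by linarith [hc.2]⟩
      rw [hm] at h3
      refine ⟨by rw [show u + (c₀ - 2*π) = c₀ + u - 2*π by ring]; exact h3,
        ⟨by simp [hw] at h1; linarith, by linarith⟩⟩
    · rintro ⟨h1, h2, h3⟩
      have hu1 : w ≤ u := by simp [hw]; linarith
      have hu2 : u < 2*π := by linarith [hc.2]
      have hm : mod2pi (c₀ + u) = c₀ + u - 2*π :=
        mod2pi_eq_sub ⟨by simp [hw] at hu1; linarith, by linarith [hc.2]⟩
      exact ⟨⟨hu1, hu2⟩, by rw [hm, show c₀ + u - 2*π = u + (c₀ - 2*π) by ring]; exact h1⟩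
  have hsplit : {u | u ∈ Ico 0 (2*π) ∧ mod2pi (c₀ + u) ∈ T} =
      {u | u ∈ Ico 0 w ∧ mod2pi (c₀ + u) ∈ T} ∪ {u | u ∈ Ico w (2*π) ∧ mod2pi (c₀ + u) ∈ T} := by
    ext u
    simp only [mem_setOf_eq, mem_union, mem_Ico]
    constructor
    · rintro ⟨⟨h1, h2⟩, h3⟩
      rcases lt_or_ge u w with h | h
      · exact Or.inl ⟨⟨h1, h⟩, h3⟩
      · exact Or.inr ⟨⟨h, h2⟩, h3⟩
    · rintro (⟨⟨h1, h2⟩, h3⟩ | ⟨⟨h1, h2⟩, h3⟩)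
      · exact ⟨⟨h1, by linarith⟩, h3⟩
      · exact ⟨⟨by linarith [hw0], h2⟩, h3⟩
  have hdisj : Disjoint {u | u ∈ Ico 0 w ∧ mod2pi (c₀ + u) ∈ T}
      {u | u ∈ Ico w (2*π) ∧ mod2pi (c₀ + u) ∈ T} := by
    apply Set.disjoint_left.mpr
    rintro u ⟨⟨_, h2⟩, _⟩ ⟨⟨h3, _⟩, _⟩
    linarith
  have hm2 : MeasurableSet ((fun u => u + (c₀ - 2*π)) ⁻¹' (T ∩ Ico 0 c₀)) :=
    (hTm.inter measurableSet_Ico).preimage (measurable_add_const _)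
  rw [hsplit, measure_union hdisj (hA2 ▸ hm2), hA1, hA2, vol_translate, vol_translate]
  have key : volume (T ∩ Ico 0 c₀) + volume (T ∩ Ico c₀ (2*π)) = volume T := by
    rw [← measure_union (Disjoint.mono inter_subset_right inter_subset_right
        (Set.Ico_disjoint_Ico_same)) (hTm.inter measurableSet_Ico),
      ← inter_union_distrib_left, Ico_union_Ico_eq_Ico hc.1 hc.2.le,
      inter_eq_self_of_subset_left hTs]
  rw [add_comm]; exact key

lemma KEY_vol (c : ℝ) {T : Set ℝ} (hTm : MeasurableSet T) (hTs : T ⊆ Ico 0 (2*π)) :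
    volume ({a | mod2pi (c + 2*a) ∈ T} ∩ Ico (π/2) (3*π/2)) = ENNReal.ofReal (1/2) * volume T := by
  set c₀ : ℝ := mod2pi (c + π) with hc₀
  set k : ℤ := ⌊(c + π) / (2*π)⌋ with hk
  have hcc : c₀ = c + π - 2*π*k := rfl
  have hseteq : {a | mod2pi (c + 2*a) ∈ T} ∩ Ico (π/2) (3*π/2) =
      (fun a => 2*a) ⁻¹' ((fun x => x + (-π)) ⁻¹' {u | u ∈ Ico 0 (2*π) ∧ mod2pi (c₀ + u) ∈ T}) := by
    ext a
    simp only [mem_inter_iff, mem_setOf_eq, mem_preimage, mem_Ico]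
    have hmm : mod2pi (c + 2*a) = mod2pi (c₀ + (2*a + -π)) := by
      rw [show c + 2*a = (c₀ + (2*a + -π)) + 2*π*k by rw [hcc]; ring, mod2pi_add_int]
    constructor
    · rintro ⟨h1, h2, h3⟩
      exact ⟨⟨by linarith, by linarith⟩, by rw [← hmm]; exact h1⟩
    · rintro ⟨⟨h1, h2⟩, h3⟩
      exact ⟨by rw [hmm]; exact h3, by linarith, by linarith⟩
  rw [hseteq]
  have hVm : MeasurableSet ((fun x => x + (-π)) ⁻¹' {u | u ∈ Ico 0 (2*π) ∧ mod2pi (c₀ + u) ∈ T}) := by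
    apply MeasurableSet.preimage ?_ (measurable_add_const _)
    exact MeasurableSet.inter measurableSet_Ico
      (hTm.preimage (measurable_mod2pi.comp (measurable_const.add measurable_id)))
  rw [show (fun a : ℝ => 2*a) = fun a : ℝ => (2:ℝ) * a from rfl]
  rw [Real.volume_preimage_mul_left (by norm_num : (2:ℝ) ≠ 0), vol_translate,
    L2' (mod2pi_mem _) hTm hTs]
  norm_num [abs_of_pos]

lemma measurable_sinHalf_dens : Measurable fun x =>
    ENNReal.ofReal (if x ∈ Icc 0 (2 * π) then (1 / 4) * Real.sin (x / 2) else 0) := by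
  apply Measurable.ennreal_ofReal
  exact Measurable.ite measurableSet_Icc (by fun_prop) measurable_const

lemma sinHalf_lower (c : ℝ) {T : Set ℝ} (hTm : MeasurableSet T) (hTs : T ⊆ Ico 0 (2*π)) :
    ENNReal.ofReal (1/16) * volume T ≤ sinHalfMeasure {a | mod2pi (c + 2*a) ∈ T} := by
  have hU : MeasurableSet {a : ℝ | mod2pi (c + 2*a) ∈ T} :=
    hTm.preimage (measurable_mod2pi.comp ((measurable_id.const_mul 2).const_add c))
  rw [sinHalfMeasure, withDensity_apply _ hU]
  have step1 : ∫⁻ a in {a | mod2pi (c + 2*a) ∈ T} ∩ Ico (π/2) (3*π/2),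
      ENNReal.ofReal (1/8) ≤
      ∫⁻ a in {a | mod2pi (c + 2*a) ∈ T},
        ENNReal.ofReal (if a ∈ Icc 0 (2 * π) then (1 / 4) * Real.sin (a / 2) else 0) := by
    refine le_trans (setLIntegral_mono measurable_sinHalf_dens ?_)
      (lintegral_mono_set inter_subset_left)
    rintro a ⟨_, h1, h2⟩
    have hpi := Real.pi_pos
    have ha : a ∈ Icc 0 (2*π) := ⟨by linarith, by linarith⟩
    rw [if_pos ha]
    apply ENNReal.ofReal_le_ofReal
    have hsin : (1:ℝ)/2 ≤ Real.sin (a/2) := by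
      have h1' : Real.sin (a/2) = Real.cos (π/2 - a/2) := (Real.cos_pi_div_two_sub _).symm
      have h2' : Real.cos (π/2 - a/2) = Real.cos |π/2 - a/2| := (Real.cos_abs _).symm
      have h3' : Real.cos (π/4) ≤ Real.cos |π/2 - a/2| := by
        apply Real.cos_le_cos_of_nonneg_of_le_pi (abs_nonneg _) (by linarith)
        exact abs_le.mpr ⟨by linarith, by linarith⟩
      have h4' : (1:ℝ) ≤ Real.sqrt 2 := by
        rw [show (1:ℝ) = Real.sqrt 1 by simp]
        exact Real.sqrt_le_sqrt (by norm_num)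
      rw [h1', h2']
      rw [Real.cos_pi_div_four] at h3'
      linarith
    linarith
  calc ENNReal.ofReal (1/16) * volume T
      = ENNReal.ofReal (1/8) * (ENNReal.ofReal (1/2) * volume T) := by
        rw [← mul_assoc, ← ENNReal.ofReal_mul (by norm_num)]; norm_num
    _ = ∫⁻ a in {a | mod2pi (c + 2*a) ∈ T} ∩ Ico (π/2) (3*π/2), ENNReal.ofReal (1/8) := by
        rw [setLIntegral_const, KEY_vol c hTm hTs]
    _ ≤ _ := step1

instance : SFinite sinHalfMeasure := by unfold sinHalfMeasure; infer_instance

instance : SFinite uniMeasure := by unfold uniMeasure; infer_instance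

lemma measurable_floorcast : Measurable fun x : ℝ => ((⌊x / (2*π)⌋ : ℤ) : ℝ) :=
  measurable_from_top.comp ((measurable_id.div_const _).floor)

lemma measurable_texp_dens : Measurable fun x =>
    ENNReal.ofReal (if x ∈ Icc 0 (2*π) then Real.exp (-x) / (1 - Real.exp (-(2*π))) else 0) := by
  apply Measurable.ennreal_ofReal
  exact Measurable.ite measurableSet_Icc (by fun_prop) measurable_const

lemma measurable_exp_dens : Measurable fun x : ℝ =>
    ENNReal.ofReal (if 0 ≤ x then Real.exp (-x) else 0) := by
  apply Measurable.ennreal_ofReal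
  exact Measurable.ite measurableSet_Ici (by fun_prop) measurable_const

/-- Döblin's condition for the Markov chain (ζ, θ) ↦ (ζ', θ'):
there is δ > 0 such that for every starting state (ζ, θ) ∈ [0,2π)² and every
measurable A ⊆ [0,2π)², the one-step transition probability into A is at least
δ · (TRUNCEXP(1,2π) ⊗ UNI[0,2π))(A). -/
theorem stmt4
    {Ω : Type*} [MeasureSpace Ω] [IsProbabilityMeasure (ℙ : Measure Ω)]
    (Ξ A : Ω → ℝ) (hΞm : Measurable Ξ) (hAm : Measurable A)
    (hindep : IndepFun Ξ A ℙ)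
    (hΞ : Measure.map Ξ ℙ = ProbabilityTheory.expMeasure 1)
    (hA : Measure.map A ℙ = sinHalfMeasure)
    (ν : Ω → ℤ) (hν : ∀ ω, ν ω = ⌊Ξ ω / (2 * π)⌋)
    (ζ' : Ω → ℝ) (hζ' : ∀ ω, ζ' ω = Ξ ω - 2 * π * (ν ω)) :
    ∃ δ : ℝ, 0 < δ ∧
      ∀ ζ θ : ℝ, ζ ∈ Ico 0 (2 * π) → θ ∈ Ico 0 (2 * π) →
        ∀ S : Set (ℝ × ℝ), MeasurableSet S → S ⊆ (Ico 0 (2 * π)) ×ˢ (Ico 0 (2 * π)) →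
          ENNReal.ofReal δ * ((truncExpMeasure (2 * π)).prod uniMeasure) S ≤
            ℙ {ω | (ζ' ω,
              mod2pi (θ + ζ / 2 + ((ν ω : ℝ) + 1) * A ω + ζ' ω / 2)) ∈ S} := by
  classical
  have hpi := Real.pi_pos
  have hexplt : Real.exp (-(2*π)) < 1 := Real.exp_lt_one_iff.mpr (by linarith)
  refine ⟨π * Real.exp (-(2*π)) * (1 - Real.exp (-(2*π))) / 8, ?_, ?_⟩
  · apply div_pos _ (by norm_num)
    exact mul_pos (mul_pos hpi (Real.exp_pos _)) (by linarith)
  intro ζ θ hζ hθ S hSm hSsub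
  set G : ℝ × ℝ → ℝ × ℝ := fun p => (mod2pi p.1,
    mod2pi (θ + ζ / 2 + ((⌊p.1 / (2 * π)⌋ : ℝ) + 1) * p.2 + mod2pi p.1 / 2)) with hG
  have hGm : Measurable G := by
    apply Measurable.prod
    · exact measurable_mod2pi.comp measurable_fst
    · apply measurable_mod2pi.comp
      apply Measurable.add
      · apply Measurable.add measurable_const
        exact ((measurable_floorcast.comp measurable_fst).add_const 1).mul measurable_snd
      · exact (measurable_mod2pi.comp measurable_fst).div_const 2
  have hGS : MeasurableSet (G ⁻¹' S) := hGm hSm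
  have hev : {ω | (ζ' ω, mod2pi (θ + ζ / 2 + ((ν ω : ℝ) + 1) * A ω + ζ' ω / 2)) ∈ S}
      = (fun ω => (Ξ ω, A ω)) ⁻¹' (G ⁻¹' S) := by
    ext ω
    have h1 : ζ' ω = mod2pi (Ξ ω) := by rw [hζ' ω, hν ω]; rfl
    simp only [mem_setOf_eq, mem_preimage, hG]
    rw [h1, hν ω]
  rw [hev]
  have hmap : Measure.map (fun ω => (Ξ ω, A ω)) ℙ = (expMeasure 1).prod sinHalfMeasure := by
    rw [← hΞ, ← hA]
    exact (indepFun_iff_map_prod_eq_prod_map_map hΞm.aemeasurable hAm.aemeasurable).mp hindep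
  rw [show ℙ ((fun ω => (Ξ ω, A ω)) ⁻¹' (G ⁻¹' S))
      = ((expMeasure 1).prod sinHalfMeasure) (G ⁻¹' S) by
    rw [← hmap, Measure.map_apply (hΞm.prodMk hAm) hGS]]
  have hexp : expMeasure 1
      = volume.withDensity (fun x => ENNReal.ofReal (if 0 ≤ x then Real.exp (-x) else 0)) := by
    rw [show expMeasure 1 = gammaMeasure 1 1 from rfl, gammaMeasure]
    congr 1
    funext x
    rw [show gammaPDF 1 1 x = exponentialPDF 1 x from rfl, exponentialPDF_eq]
    simp only [one_mul]
  have hslice_m : Measurable fun x => sinHalfMeasure (Prod.mk x ⁻¹' (G ⁻¹' S)) :=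
    measurable_measure_prodMk_left hGS
  rw [Measure.prod_apply hGS, hexp,
    lintegral_withDensity_eq_lintegral_mul _ measurable_exp_dens hslice_m]
  -- lower bound for the right-hand side
  have hslice_eq : ∀ x ∈ Ico (2*π) (4*π), Prod.mk x ⁻¹' (G ⁻¹' S)
      = {a | mod2pi ((θ + ζ / 2 + (x - 2*π) / 2) + 2*a) ∈ (Prod.mk (x - 2*π) ⁻¹' S)} := by
    intro x hx
    have hfl : ⌊x / (2*π)⌋ = 1 := by
      rw [Int.floor_eq_iff]
      constructor
      · push_cast
        rw [le_div_iff₀ Real.two_pi_pos]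
        linarith [hx.1]
      · push_cast
        rw [div_lt_iff₀ Real.two_pi_pos]
        linarith [hx.2]
    have hmx : mod2pi x = x - 2*π := mod2pi_eq_sub hx
    ext a
    simp only [mem_preimage, mem_setOf_eq, hG, hfl, hmx]
    rw [show θ + ζ / 2 + (((1:ℤ) : ℝ) + 1) * a + (x - 2*π) / 2
        = (θ + ζ / 2 + (x - 2*π) / 2) + 2*a by push_cast; ring]
  have main : ∫⁻ x in Ico (2*π) (4*π),
      ENNReal.ofReal (Real.exp (-x)) * (ENNReal.ofReal (1/16)
        * volume (Prod.mk (x - 2*π) ⁻¹' S)) ∂volume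
      ≤ ∫⁻ x, ((fun x => ENNReal.ofReal (if 0 ≤ x then Real.exp (-x) else 0))
          * fun x => sinHalfMeasure (Prod.mk x ⁻¹' (G ⁻¹' S))) x ∂volume := by
    refine le_trans (setLIntegral_mono (measurable_exp_dens.mul hslice_m) ?_)
      (setLIntegral_le_lintegral _ _)
    intro x hx
    have hTm : MeasurableSet (Prod.mk (x - 2*π) ⁻¹' S) := measurable_prodMk_left hSm
    have hTs : Prod.mk (x - 2*π) ⁻¹' S ⊆ Ico 0 (2*π) := fun t ht => (hSsub ht).2
    have hb := sinHalf_lower (θ + ζ / 2 + (x - 2*π) / 2) hTm hTs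
    rw [← hslice_eq x hx] at hb
    simp only [Pi.mul_apply]
    rw [if_pos (by linarith [hx.1] : (0:ℝ) ≤ x)]
    exact mul_le_mul_right hb _
  refine le_trans ?_ main
  -- translate the integral
  have htrans : ∫⁻ x in Ico (2*π) (4*π),
      ENNReal.ofReal (Real.exp (-x)) * (ENNReal.ofReal (1/16)
        * volume (Prod.mk (x - 2*π) ⁻¹' S)) ∂volume
      = ∫⁻ y in Ico 0 (2*π),
      ENNReal.ofReal (Real.exp (-(y + 2*π))) * (ENNReal.ofReal (1/16)
        * volume (Prod.mk y ⁻¹' S)) ∂volume := by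
    have himg : (fun x : ℝ => x + 2*π) '' Ico 0 (2*π) = Ico (2*π) (4*π) := by
      ext x
      simp only [mem_image, mem_Ico]
      constructor
      · rintro ⟨y, ⟨h1, h2⟩, rfl⟩
        exact ⟨by linarith, by linarith⟩
      · rintro ⟨h1, h2⟩
        exact ⟨x - 2*π, ⟨by linarith, by linarith⟩, by ring⟩
    calc ∫⁻ x in Ico (2*π) (4*π),
        ENNReal.ofReal (Real.exp (-x)) * (ENNReal.ofReal (1/16)
          * volume (Prod.mk (x - 2*π) ⁻¹' S)) ∂volume
        = ∫⁻ x in (fun x : ℝ => x + 2*π) '' Ico 0 (2*π),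
          ENNReal.ofReal (Real.exp (-x)) * (ENNReal.ofReal (1/16)
            * volume (Prod.mk (x - 2*π) ⁻¹' S)) ∂volume := by rw [himg]
      _ = ∫⁻ y in Ico 0 (2*π),
          ENNReal.ofReal (Real.exp (-(y + 2*π))) * (ENNReal.ofReal (1/16)
            * volume (Prod.mk ((y + 2*π) - 2*π) ⁻¹' S)) ∂volume :=
          ((measurePreserving_add_right volume (2*π)).setLIntegral_comp_emb
            (MeasurableEquiv.addRight (2*π)).measurableEmbedding
            (fun x => ENNReal.ofReal (Real.exp (-x)) * (ENNReal.ofReal (1/16)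
              * volume (Prod.mk (x - 2*π) ⁻¹' S))) (Ico 0 (2*π))).symm
      _ = ∫⁻ y in Ico 0 (2*π),
          ENNReal.ofReal (Real.exp (-(y + 2*π))) * (ENNReal.ofReal (1/16)
            * volume (Prod.mk y ⁻¹' S)) ∂volume := by
          apply lintegral_congr
          intro y
          simp only [add_sub_cancel_right]
  rw [htrans]
  have huni : ∀ y : ℝ, uniMeasure (Prod.mk y ⁻¹' S)
      = (ENNReal.ofReal (2*π))⁻¹ * volume (Prod.mk y ⁻¹' S) := by
    intro y
    rw [uniMeasure, Measure.smul_apply, Measure.restrict_apply (measurable_prodMk_left hSm)]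
    have hss : Prod.mk y ⁻¹' S ∩ Ico 0 (2*π) = Prod.mk y ⁻¹' S :=
      inter_eq_self_of_subset_left (fun t ht => (hSsub ht).2)
    rw [hss, smul_eq_mul]
  have huslice_m : Measurable fun y => uniMeasure (Prod.mk y ⁻¹' S) :=
    measurable_measure_prodMk_left hSm
  have hprod : ((truncExpMeasure (2*π)).prod uniMeasure) S
      = ∫⁻ y in Ico 0 (2*π), ENNReal.ofReal (Real.exp (-y) / (1 - Real.exp (-(2*π))))
          * ((ENNReal.ofReal (2*π))⁻¹ * volume (Prod.mk y ⁻¹' S)) ∂volume := by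
    rw [truncExpMeasure, Measure.prod_apply hSm,
      lintegral_withDensity_eq_lintegral_mul _ measurable_texp_dens huslice_m,
      ← lintegral_indicator measurableSet_Ico]
    apply lintegral_congr
    intro y
    by_cases hy : y ∈ Ico 0 (2*π)
    · have hyIcc : y ∈ Icc 0 (2*π) := ⟨hy.1, hy.2.le⟩
      rw [indicator_of_mem hy, Pi.mul_apply, huni y, if_pos hyIcc]
    · rw [indicator_of_notMem hy, Pi.mul_apply, huni y]
      have hempty : Prod.mk y ⁻¹' S = ∅ := by
        ext t
        simp only [mem_preimage, mem_empty_iff_false, iff_false]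
        intro ht
        exact hy (hSsub ht).1
      rw [hempty]
      simp
  rw [hprod, ← lintegral_const_mul' _ _ ENNReal.ofReal_ne_top]
  apply setLIntegral_mono
  · apply Measurable.mul
    · exact Measurable.ennreal_ofReal (by fun_prop)
    · exact measurable_const.mul (measurable_measure_prodMk_left hSm)
  intro y hy
  apply le_of_eq
  have hE : (0:ℝ) < 1 - Real.exp (-(2*π)) := by linarith
  have hδ : (0:ℝ) ≤ π * Real.exp (-(2*π)) * (1 - Real.exp (-(2*π))) / 8 := by positivity
  have hdens : (0:ℝ) ≤ Real.exp (-y) / (1 - Real.exp (-(2*π))) := by positivity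
  have h2 : (ENNReal.ofReal (2*π))⁻¹ = ENNReal.ofReal ((2*π)⁻¹) :=
    (ENNReal.ofReal_inv_of_pos Real.two_pi_pos).symm
  calc ENNReal.ofReal (π * Real.exp (-(2*π)) * (1 - Real.exp (-(2*π))) / 8)
        * (ENNReal.ofReal (Real.exp (-y) / (1 - Real.exp (-(2*π))))
          * ((ENNReal.ofReal (2*π))⁻¹ * volume (Prod.mk y ⁻¹' S)))
      = (ENNReal.ofReal (π * Real.exp (-(2*π)) * (1 - Real.exp (-(2*π))) / 8)
          * ENNReal.ofReal (Real.exp (-y) / (1 - Real.exp (-(2*π))))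
          * ENNReal.ofReal ((2*π)⁻¹)) * volume (Prod.mk y ⁻¹' S) := by
        rw [h2]; ring
    _ = (ENNReal.ofReal (Real.exp (-(y + 2*π))) * ENNReal.ofReal (1/16))
          * volume (Prod.mk y ⁻¹' S) := by
        rw [← ENNReal.ofReal_mul hδ, ← ENNReal.ofReal_mul (by positivity),
          ← ENNReal.ofReal_mul (Real.exp_nonneg _)]
        congr 2
        have hexpadd : Real.exp (-(y + 2*π)) = Real.exp (-y) * Real.exp (-(2*π)) := by
          rw [← Real.exp_add]; ring_nf
        rw [hexpadd]
        generalize Real.exp (-(2*π)) = e at hE ⊢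
        field_simp [hE.ne']
        ring
    _ = ENNReal.ofReal (Real.exp (-(y + 2*π)))
          * (ENNReal.ofReal (1/16) * volume (Prod.mk y ⁻¹' S)) := by ring
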